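/- arXiv:1112.5792 — 2 statements merged into one kernel-verified Lean document; each statement's English description precedes it below -/
import Mathlib

section
/- Let H and K be real inner product spaces, let F : H × K → H and G : H → H, let μ, ν ∈ ℝ, ℓ ≥ 0, α ∈ [0,1] and a > 0, and define Φ : H × K → H by Φ(y,z) = α • F(y,z) + (1−α) • G(y). Assume ⟨y′−y, F(y′,z)−F(y,z)⟩ ≤ μ‖y′−y‖² for all y,y′ ∈ H, z ∈ K; ⟨y′−y, G(y′)−G(y)⟩ ≤ ν‖y′−y‖² for all y,y′ ∈ H; and ‖F(y,z′)−F(y,z)‖ ≤ ℓ‖z′−z‖ for all y ∈ H, z,z′ ∈ K. Then for all y ∈ H and z ∈ K: ⟨y, Φ(y,z)⟩ ≤ ‖y‖·‖Φ(0,0)‖ + ((μ + (a/2)ℓ²)α + ν(1−α))‖y‖² + (α/(2a))‖z‖². -/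
theorem a_priori_estimate_one
    {H K : Type*} [NormedAddCommGroup H] [InnerProductSpace ℝ H]
    [NormedAddCommGroup K] [InnerProductSpace ℝ K]
    (F : H × K → H) (G : H → H) (μ ν ℓ α a : ℝ)
    (hℓ : 0 ≤ ℓ) (hα0 : 0 ≤ α) (hα1 : α ≤ 1) (ha : 0 < a)
    (Φ : H × K → H)
    (hΦ : ∀ y z, Φ (y, z) = α • F (y, z) + (1 - α) • G y)
    (hF_mono : ∀ y y' z, (inner ℝ (y' - y) (F (y', z) - F (y, z)) : ℝ) ≤ μ * ‖y' - y‖ ^ 2)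
    (hG_mono : ∀ y y', (inner ℝ (y' - y) (G y' - G y) : ℝ) ≤ ν * ‖y' - y‖ ^ 2)
    (hF_lip : ∀ y z z', ‖F (y, z') - F (y, z)‖ ≤ ℓ * ‖z' - z‖) :
    ∀ y : H, ∀ z : K,
      (inner ℝ y (Φ (y, z)) : ℝ) ≤
        ‖y‖ * ‖Φ (0, 0)‖ + ((μ + a / 2 * ℓ ^ 2) * α + ν * (1 - α)) * ‖y‖ ^ 2
          + α / (2 * a) * ‖z‖ ^ 2 := by
  intro y z
  have h1 : (inner ℝ y (F (y, z) - F (y, 0)) : ℝ) ≤ ℓ * ‖y‖ * ‖z‖ := by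
    calc (inner ℝ y (F (y, z) - F (y, 0)) : ℝ) ≤ ‖y‖ * ‖F (y, z) - F (y, 0)‖ :=
          real_inner_le_norm _ _
      _ ≤ ‖y‖ * (ℓ * ‖z - 0‖) := by
          exact mul_le_mul_of_nonneg_left (hF_lip y 0 z) (norm_nonneg _)
      _ = ℓ * ‖y‖ * ‖z‖ := by rw [sub_zero]; ring
  have h2 : (inner ℝ y (F (y, 0) - F (0, 0)) : ℝ) ≤ μ * ‖y‖ ^ 2 := by
    have := hF_mono 0 y 0
    simpa using this
  have h3 : (inner ℝ y (G y - G 0) : ℝ) ≤ ν * ‖y‖ ^ 2 := by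
    have := hG_mono 0 y
    simpa using this
  have h4 : (inner ℝ y (Φ (0, 0)) : ℝ) ≤ ‖y‖ * ‖Φ (0, 0)‖ := real_inner_le_norm _ _
  have key : (inner ℝ y (Φ (y, z)) : ℝ) =
      α * ((inner ℝ y (F (y, z) - F (y, 0)) : ℝ) + (inner ℝ y (F (y, 0) - F (0, 0)) : ℝ))
        + (1 - α) * (inner ℝ y (G y - G 0) : ℝ) + (inner ℝ y (Φ (0, 0)) : ℝ) := by
    rw [hΦ y z, hΦ 0 0]
    simp [inner_add_right, inner_smul_right, inner_sub_right]
    ring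
  have hyoung : ℓ * ‖y‖ * ‖z‖ ≤ a / 2 * ℓ ^ 2 * ‖y‖ ^ 2 + 1 / (2 * a) * ‖z‖ ^ 2 := by
    rw [show a / 2 * ℓ ^ 2 * ‖y‖ ^ 2 + 1 / (2 * a) * ‖z‖ ^ 2
        = (a ^ 2 * ℓ ^ 2 * ‖y‖ ^ 2 + ‖z‖ ^ 2) / (2 * a) from by field_simp,
      le_div_iff₀ (by positivity)]
    nlinarith [sq_nonneg (a * ℓ * ‖y‖ - ‖z‖)]
  have hα1' : 0 ≤ 1 - α := by linarith
  have hA : α * ((inner ℝ y (F (y, z) - F (y, 0)) : ℝ) + (inner ℝ y (F (y, 0) - F (0, 0)) : ℝ))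
      ≤ α * (a / 2 * ℓ ^ 2 * ‖y‖ ^ 2 + 1 / (2 * a) * ‖z‖ ^ 2 + μ * ‖y‖ ^ 2) :=
    mul_le_mul_of_nonneg_left (by linarith) hα0
  have hB : (1 - α) * (inner ℝ y (G y - G 0) : ℝ) ≤ (1 - α) * (ν * ‖y‖ ^ 2) :=
    mul_le_mul_of_nonneg_left h3 hα1'
  have e : α * (a / 2 * ℓ ^ 2 * ‖y‖ ^ 2 + 1 / (2 * a) * ‖z‖ ^ 2 + μ * ‖y‖ ^ 2)
      + (1 - α) * (ν * ‖y‖ ^ 2) + ‖y‖ * ‖Φ (0, 0)‖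
      = ‖y‖ * ‖Φ (0, 0)‖ + ((μ + a / 2 * ℓ ^ 2) * α + ν * (1 - α)) * ‖y‖ ^ 2
          + α / (2 * a) * ‖z‖ ^ 2 := by
    field_simp
    ring
  rw [key]
  linarith [hA, hB, h4, e]
end

section
/- Let H and K be real inner product spaces, let F : H × K → H and G : H → H, let μ, ν ∈ ℝ, ℓ ≥ 0, α ∈ [0,1] and a > 0, and define Φ : H × K → H by Φ(y,z) = α • F(y,z) + (1−α) • G(y). Assume ⟨y′−y, F(y′,z)−F(y,z)⟩ ≤ μ‖y′−y‖² for all y,y′ ∈ H, z ∈ K; ⟨y′−y, G(y′)−G(y)⟩ ≤ ν‖y′−y‖² for all y,y′ ∈ H; and ‖F(y,z′)−F(y,z)‖ ≤ ℓ‖z′−z‖ for all y ∈ H, z,z′ ∈ K. Then for all y, ỹ ∈ H and z, z̃ ∈ K: ⟨y−ỹ, Φ(y,z)−Φ(ỹ,z̃)⟩ ≤ ((μ + (a/2)ℓ²)α + ν(1−α))‖y−ỹ‖² + (α/(2a))‖z−z̃‖². -/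
theorem a_priori_estimate_two
    {H K : Type*} [NormedAddCommGroup H] [InnerProductSpace ℝ H]
    [NormedAddCommGroup K] [InnerProductSpace ℝ K]
    (F : H × K → H) (G : H → H) (μ ν ℓ α a : ℝ)
    (hℓ : 0 ≤ ℓ) (hα0 : 0 ≤ α) (hα1 : α ≤ 1) (ha : 0 < a)
    (Φ : H × K → H)
    (hΦ : ∀ y z, Φ (y, z) = α • F (y, z) + (1 - α) • G y)
    (hF_mono : ∀ y y' z, (inner ℝ (y' - y) (F (y', z) - F (y, z)) : ℝ) ≤ μ * ‖y' - y‖ ^ 2)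
    (hG_mono : ∀ y y', (inner ℝ (y' - y) (G y' - G y) : ℝ) ≤ ν * ‖y' - y‖ ^ 2)
    (hF_lip : ∀ y z z', ‖F (y, z') - F (y, z)‖ ≤ ℓ * ‖z' - z‖) :
    ∀ y ytilde : H, ∀ z ztilde : K,
      (inner ℝ (y - ytilde) (Φ (y, z) - Φ (ytilde, ztilde)) : ℝ) ≤
        ((μ + a / 2 * ℓ ^ 2) * α + ν * (1 - α)) * ‖y - ytilde‖ ^ 2
          + α / (2 * a) * ‖z - ztilde‖ ^ 2 := by
  intro y yt z zt
  have h1 := hF_mono yt y z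
  have hGd := hG_mono yt y
  have hlip := hF_lip yt zt z
  have h2 : (inner ℝ (y - yt) (F (yt, z) - F (yt, zt)) : ℝ) ≤ ‖y - yt‖ * (ℓ * ‖z - zt‖) := by
    calc (inner ℝ (y - yt) (F (yt, z) - F (yt, zt)) : ℝ)
        ≤ ‖y - yt‖ * ‖F (yt, z) - F (yt, zt)‖ := real_inner_le_norm _ _
      _ ≤ ‖y - yt‖ * (ℓ * ‖z - zt‖) := by
          exact mul_le_mul_of_nonneg_left hlip (norm_nonneg _)
  have hyoung : ‖y - yt‖ * (ℓ * ‖z - zt‖) ≤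
      a / 2 * ℓ ^ 2 * ‖y - yt‖ ^ 2 + 1 / (2 * a) * ‖z - zt‖ ^ 2 := by
    have heq : a / 2 * ℓ ^ 2 * ‖y - yt‖ ^ 2 + 1 / (2 * a) * ‖z - zt‖ ^ 2
        = (a ^ 2 * ℓ ^ 2 * ‖y - yt‖ ^ 2 + ‖z - zt‖ ^ 2) / (2 * a) := by
      field_simp
    rw [heq, le_div_iff₀ (by positivity)]
    nlinarith [sq_nonneg (a * ℓ * ‖y - yt‖ - ‖z - zt‖)]
  have key : Φ (y, z) - Φ (yt, zt) =
      α • ((F (y, z) - F (yt, z)) + (F (yt, z) - F (yt, zt))) + (1 - α) • (G y - G yt) := by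
    rw [hΦ, hΦ]
    simp only [smul_add, smul_sub]
    abel
  rw [key]
  simp only [inner_add_right, real_inner_smul_right]
  have hα2 : 0 ≤ 1 - α := by linarith
  have hfin : α * (1 / (2 * a)) = α / (2 * a) := by ring
  nlinarith [mul_le_mul_of_nonneg_left (add_le_add (le_trans h2 hyoung) hGd) hα0,
    mul_le_mul_of_nonneg_left h1 hα0, mul_le_mul_of_nonneg_left hGd hα2]
end
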